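/- Let F be a finite field of characteristic 2 with at least 4 elements, and let A be a non-derogative 2×2 matrix over F with trace(A) = 0. Then there exist 2×2 matrices N and D over F such that A = N + D, N² = 0, and D³ = D. -/

import Mathlib

/-- `D` is diagonalizable with all eigenvalues (diagonal entries) lying in `S`. -/
def DiagWith {F : Type*} [Field F] {n : ℕ}
    (D : Matrix (Fin n) (Fin n) F) (S : Set F) : Prop :=
  ∃ (U : (Matrix (Fin n) (Fin n) F)ˣ) (d : Fin n → F),
    (∀ i, d i ∈ S) ∧
    D = (U : Matrix (Fin n) (Fin n) F) * Matrix.diagonal d *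
        ((↑U⁻¹ : Matrix (Fin n) (Fin n) F))

/-- A square matrix is non-derogative if its characteristic polynomial equals
its minimal polynomial. -/
def Nonderogative {F : Type*} [Field F] {n : ℕ}
    (B : Matrix (Fin n) (Fin n) F) : Prop :=
  B.charpoly = minpoly F B
theorem stmt16 (F : Type*) [Field F] [Fintype F] [CharP F 2]
    (hF : 4 ≤ Fintype.card F)
    (A : Matrix (Fin 2) (Fin 2) F) (hA : Nonderogative A)
    (htr : Matrix.trace A = 0) :
    ∃ N D : Matrix (Fin 2) (Fin 2) F,
      A = N + D ∧ N ^ 2 = 0 ∧ D ^ 3 = D := by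
  have h2 : (2 : F) = 0 := by
    have := CharP.cast_eq_zero F 2
    simpa using this
  set a := A 0 0 with ha
  set b := A 0 1 with hb
  set c := A 1 0 with hc
  have htr' : a + A 1 1 = 0 := by
    have := htr
    rw [Matrix.trace_fin_two] at this
    exact this
  have hd : A 1 1 = a := by linear_combination htr' - a * h2
  have hAeta : A = !![a, b; c, a] := by
    rw [Matrix.eta_fin_two A, hd]
  -- rule out the scalar case
  have hbc : ¬ (b = 0 ∧ c = 0) := by
    rintro ⟨hb0, hc0⟩
    have hscal : A = algebraMap F (Matrix (Fin 2) (Fin 2) F) a := by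
      rw [hAeta, hb0, hc0]
      ext i j
      fin_cases i <;> fin_cases j <;>
        simp [Matrix.algebraMap_matrix_apply]
    have hdvd : minpoly F A ∣ (Polynomial.X - Polynomial.C a) := by
      apply minpoly.dvd
      simp [hscal, Algebra.algebraMap_eq_smul_one, sub_eq_zero]
    have hne : (Polynomial.X - Polynomial.C a) ≠ 0 := Polynomial.X_sub_C_ne_zero a
    have hle := Polynomial.natDegree_le_of_dvd hdvd hne
    rw [Polynomial.natDegree_X_sub_C] at hle
    have hdeg : (minpoly F A).natDegree = 2 := by
      rw [← hA, Matrix.charpoly_natDegree_eq_dim]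
      simp
    omega
  rcases ne_or_eq b 0 with hb0 | hb0
  · -- b ≠ 0
    set r : F := (a ^ 2 + b * c + 1) / b with hrdef
    have hbr : b * r = a ^ 2 + b * c + 1 := by
      rw [hrdef]
      field_simp
    refine ⟨!![a + 1, b; c + r, a + 1], !![1, 0; r, 1], ?_, ?_, ?_⟩
    · rw [hAeta]
      ext i j
      fin_cases i <;> fin_cases j <;>
        simp [Matrix.add_apply] <;>
        first
          | linear_combination (-1 : F) * h2
          | linear_combination (-2 : F) * h2
          | linear_combination (-1 - c * b * b⁻¹ - a ^ 2 * b⁻¹ - b⁻¹) * h2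
          | linear_combination (-c * b * b⁻¹ - a ^ 2 * b⁻¹ - b⁻¹) * h2
    · rw [pow_two]
      ext i j
      fin_cases i <;> fin_cases j <;>
        simp [Matrix.mul_apply, Fin.sum_univ_two]
      · linear_combination hbr + (a ^ 2 + a + b * c + 1) * h2
      · linear_combination (a * b + b) * h2
      · linear_combination (a * c + a * r + c + r) * h2
      · linear_combination hbr + (a ^ 2 + a + b * c + 1) * h2
    · show _ ^ 3 = _
      rw [pow_succ, pow_two]
      ext i j
      fin_cases i <;> fin_cases j <;>
        simp [Matrix.mul_apply, Fin.sum_univ_two] <;>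
        linear_combination r * h2
  · -- b = 0, so c ≠ 0
    have hc0 : c ≠ 0 := by
      intro hc0
      exact hbc ⟨hb0, hc0⟩
    set q : F := (a ^ 2 + b * c + 1) / c with hqdef
    have hcq : c * q = a ^ 2 + b * c + 1 := by
      rw [hqdef]
      field_simp
    refine ⟨!![a + 1, b + q; c, a + 1], !![1, q; 0, 1], ?_, ?_, ?_⟩
    · rw [hAeta]
      ext i j
      fin_cases i <;> fin_cases j <;>
        simp [Matrix.add_apply] <;>
        first
          | linear_combination (-1 : F) * h2
          | linear_combination (-2 : F) * h2
          | linear_combination (-1 - b * c * c⁻¹ - a ^ 2 * c⁻¹ - c⁻¹) * h2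
          | linear_combination (-b * c * c⁻¹ - a ^ 2 * c⁻¹ - c⁻¹) * h2
    · rw [pow_two]
      ext i j
      fin_cases i <;> fin_cases j <;>
        simp [Matrix.mul_apply, Fin.sum_univ_two]
      · linear_combination hcq + (a ^ 2 + a + b * c + 1) * h2
      · linear_combination (a * b + a * q + b + q) * h2
      · linear_combination (a * c + c) * h2
      · linear_combination hcq + (a ^ 2 + a + b * c + 1) * h2
    · show _ ^ 3 = _
      rw [pow_succ, pow_two]
      ext i j
      fin_cases i <;> fin_cases j <;>
        simp [Matrix.mul_apply, Fin.sum_univ_two] <;>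
        linear_combination q * h2
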